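/- Let N ≥ 2 be an integer and γ > 1. Then along the infinitesimal Moser sequence w_j one has J_γ(w_j) = ∫₀¹ exp( ( log(e/s) + γ·log log(e/s) ) · w_j(s)^N / s^{N−1} ) ds → +∞ as j → ∞; more precisely J_γ(w_j) ≥ e·(log(ej))^{γ−1}(1 + o(1)). In particular sup_{v ∈ E_N} J_γ(v) = +∞ for γ > 1. -/

import Mathlib

open MeasureTheory Real Set Filter

/-- `u` belongs to `E_N` with weak derivative `g`. -/
def MemEN (N : ℕ) (u g : ℝ → ℝ) : Prop :=
  (∀ s ∈ Set.Icc (0:ℝ) 1, u s = ∫ t in (0:ℝ)..s, g t) ∧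
  u 0 = 0 ∧
  IntervalIntegrable g MeasureTheory.volume 0 1 ∧
  MeasureTheory.IntegrableOn (fun t => |g t| ^ N) (Set.Ioc (0:ℝ) 1) ∧
  (∫ t in Set.Ioc (0:ℝ) 1, |g t| ^ N) = 1

/-- The improved (log log) Bliss-Moser functional `J_γ`. -/
noncomputable def Jfun (N : ℕ) (γ : ℝ) (v : ℝ → ℝ) : ℝ :=
  ∫ s in Set.Ioc (0:ℝ) 1,
    Real.exp ((Real.log (Real.exp 1 / s) + γ * Real.log (Real.log (Real.exp 1 / s))) *
      (v s ^ N / s ^ (N - 1)))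

/-- The infinitesimal Moser sequence `w_j`. -/
noncomputable def moser (N j : ℕ) (t : ℝ) : ℝ :=
  if t ≤ 1 / (j : ℝ) then (j : ℝ) ^ ((1:ℝ) / N) * t
  else (j : ℝ) ^ (-(((N:ℝ) - 1) / N))

/-! ### Auxiliary definitions and lemmas -/

noncomputable def Lj (j : ℕ) : ℝ := Real.log (Real.exp 1 * j)
noncomputable def Mj (γ : ℝ) (j : ℕ) : ℝ := Lj j + γ * Real.log (Lj j)
noncomputable def Bj (γ : ℝ) (j : ℕ) : ℝ := (Real.exp (Mj γ j) - 1) / ((j : ℝ) * Mj γ j)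

lemma one_le_Lj {j : ℕ} (hj : 1 ≤ j) : 1 ≤ Lj j := by
  have hj1 : (1:ℝ) ≤ j := by exact_mod_cast hj
  have h : Real.exp 1 ≤ Real.exp 1 * j := le_mul_of_one_le_right (Real.exp_pos 1).le hj1
  calc (1:ℝ) = Real.log (Real.exp 1) := (Real.log_exp 1).symm
    _ ≤ Lj j := Real.log_le_log (Real.exp_pos 1) h

lemma one_le_Mj {γ : ℝ} (hγ : 0 < γ) {j : ℕ} (hj : 1 ≤ j) : 1 ≤ Mj γ j := by
  have h1 := one_le_Lj hj
  have h2 : 0 ≤ Real.log (Lj j) := Real.log_nonneg h1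
  have h3 : 0 ≤ γ * Real.log (Lj j) := by positivity
  unfold Mj; linarith

lemma measurable_moser (N j : ℕ) : Measurable (moser N j) := by
  unfold moser
  exact Measurable.ite measurableSet_Iic (measurable_const.mul measurable_id) measurable_const

lemma measurable_F (N j : ℕ) (γ : ℝ) :
    Measurable (fun s : ℝ => Real.exp ((Real.log (Real.exp 1 / s) +
      γ * Real.log (Real.log (Real.exp 1 / s))) * (moser N j s ^ N / s ^ (N - 1)))) := by
  have h1 : Measurable fun s : ℝ => Real.log (Real.exp 1 / s) :=
    Real.measurable_log.comp (measurable_const.div measurable_id)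
  have h2 : Measurable fun s : ℝ => Real.log (Real.log (Real.exp 1 / s)) :=
    Real.measurable_log.comp h1
  exact Real.measurable_exp.comp ((h1.add (h2.const_mul γ)).mul
    (((measurable_moser N j).pow_const N).div (measurable_id.pow_const (N-1))))

lemma integral_step (b d c : ℝ) (hb : 0 ≤ b) (hd : 0 ≤ d) :
    ∫ t in Set.Ioc (0:ℝ) b, (if t ≤ d then c else 0) = min b d * c := by
  have hind : (fun t : ℝ => if t ≤ d then c else 0) = Set.indicator (Set.Iic d) (fun _ => c) := by
    funext t; simp [Set.indicator_apply, Set.mem_Iic]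
  rw [hind, MeasureTheory.setIntegral_indicator measurableSet_Iic, Set.Ioc_inter_Iic,
    MeasureTheory.setIntegral_const, smul_eq_mul, measureReal_def, Real.volume_Ioc,
    ENNReal.toReal_ofReal (by simp [le_min hb hd])]
  rw [sub_zero]

lemma moser_pow_low (N : ℕ) (hN : 2 ≤ N) (j : ℕ) (hj : 1 ≤ j) (s : ℝ) (hs : 0 < s)
    (hs2 : s ≤ 1/(j:ℝ)) : moser N j s ^ N / s ^ (N - 1) = (j:ℝ) * s := by
  have hj0 : (0:ℝ) < j := by exact_mod_cast hj
  have hNr : ((N:ℝ)) ≠ 0 := Nat.cast_ne_zero.mpr (by omega)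
  rw [moser, if_pos hs2, mul_pow]
  have hjN : ((j:ℝ) ^ ((1:ℝ)/N)) ^ (N:ℕ) = (j:ℝ) := by
    rw [← Real.rpow_natCast ((j:ℝ) ^ ((1:ℝ)/N)) N, ← Real.rpow_mul hj0.le,
      one_div, inv_mul_cancel₀ hNr, Real.rpow_one]
  rw [hjN]
  have hsN : s ^ N = s ^ (N-1) * s := by
    rw [← pow_succ]; congr 1; omega
  have h0 : s ^ (N-1) ≠ 0 := pow_ne_zero _ (ne_of_gt hs)
  rw [hsN]
  field_simp

lemma moser_pow_high (N : ℕ) (hN : 2 ≤ N) (j : ℕ) (hj : 1 ≤ j) (s : ℝ) (hs : 0 < s)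
    (hs2 : 1/(j:ℝ) < s) : moser N j s ^ N / s ^ (N - 1) ≤ 1 := by
  have hj0 : (0:ℝ) < j := by exact_mod_cast hj
  have hjs : 1 ≤ (j:ℝ) * s := by
    rw [div_lt_iff₀ hj0] at hs2; linarith
  rw [moser, if_neg (not_le.mpr hs2)]
  have hcast : ((N:ℝ) - 1) = ((N - 1 : ℕ) : ℝ) := by
    have h1 : (1:ℕ) ≤ N := by omega
    push_cast [h1]; ring
  have hpow : ((j:ℝ) ^ (-(((N:ℝ) - 1) / N))) ^ (N:ℕ) = ((j:ℝ) ^ (N-1:ℕ))⁻¹ := by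
    rw [← Real.rpow_natCast ((j:ℝ) ^ (-(((N:ℝ)-1)/N))) N, ← Real.rpow_mul hj0.le]
    have hNr : ((N:ℝ)) ≠ 0 := Nat.cast_ne_zero.mpr (by omega)
    have h2 : (-(((N:ℝ)-1)/N)) * N = -((N:ℝ)-1) := by field_simp
    rw [h2, Real.rpow_neg hj0.le, hcast, Real.rpow_natCast]
  rw [hpow]
  have heq : ((j:ℝ)^(N-1:ℕ))⁻¹ / s^(N-1) = (((j:ℝ)*s)^(N-1:ℕ))⁻¹ := by
    rw [mul_pow, mul_inv, div_eq_mul_inv]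
  rw [heq]
  exact inv_le_one_of_one_le₀ (one_le_pow₀ hjs)

lemma Bj_le_Jfun (N : ℕ) (hN : 2 ≤ N) (γ : ℝ) (hγ : 1 < γ) {j : ℕ} (hj : 1 ≤ j) :
    Bj γ j ≤ Jfun N γ (moser N j) := by
  have hj1 : (1:ℝ) ≤ j := by exact_mod_cast hj
  have hj0 : (0:ℝ) < j := by linarith
  have hL : 1 ≤ Lj j := one_le_Lj hj
  have hM : 1 ≤ Mj γ j := one_le_Mj (by linarith) hj
  have hc : 0 < (j:ℝ) * Mj γ j := by nlinarith
  set F : ℝ → ℝ := fun s => Real.exp ((Real.log (Real.exp 1 / s) +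
    γ * Real.log (Real.log (Real.exp 1 / s))) * (moser N j s ^ N / s ^ (N - 1))) with hF
  have hmeas : Measurable F := measurable_F N j γ
  have hinv1 : 1/(j:ℝ) ≤ 1 := by rw [div_le_one hj0]; exact hj1
  have hAfacts : ∀ s : ℝ, 0 < s → s ≤ 1 →
      1 ≤ Real.log (Real.exp 1 / s) ∧ 0 ≤ Real.log (Real.log (Real.exp 1 / s)) := by
    intro s hs hs1
    have he : Real.exp 1 ≤ Real.exp 1 / s := by
      rw [le_div_iff₀ hs]; nlinarith [Real.exp_pos 1]
    have h1 : 1 ≤ Real.log (Real.exp 1 / s) := by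
      calc (1:ℝ) = Real.log (Real.exp 1) := (Real.log_exp 1).symm
        _ ≤ _ := Real.log_le_log (Real.exp_pos 1) he
    exact ⟨h1, Real.log_nonneg h1⟩
  have hub : ∀ s ∈ Set.Ioc (0:ℝ) 1, F s ≤ Real.exp ((1+γ) * (Real.exp 1 * j)) := by
    rintro s ⟨hs0, hs1⟩
    obtain ⟨h1, h2⟩ := hAfacts s hs0 hs1
    have hlogle : Real.log (Real.log (Real.exp 1 / s)) ≤ Real.log (Real.exp 1 / s) :=
      Real.log_le_self (by linarith)
    apply Real.exp_le_exp.mpr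
    by_cases hcase : s ≤ 1/(j:ℝ)
    · rw [moser_pow_low N hN j hj s hs0 hcase]
      have hjs0 : (0:ℝ) ≤ (j:ℝ)*s := by positivity
      have hA : Real.log (Real.exp 1 / s) + γ * Real.log (Real.log (Real.exp 1 / s)) ≤
          (1+γ) * Real.log (Real.exp 1 / s) := by nlinarith
      have hle : Real.log (Real.exp 1 / s) ≤ Real.exp 1 / s := Real.log_le_self (by positivity)
      calc (Real.log (Real.exp 1 / s) + γ * Real.log (Real.log (Real.exp 1 / s))) * ((j:ℝ)*s)
          ≤ ((1+γ) * Real.log (Real.exp 1 / s)) * ((j:ℝ)*s) :=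
            mul_le_mul_of_nonneg_right hA hjs0
        _ ≤ ((1+γ) * (Real.exp 1 / s)) * ((j:ℝ)*s) :=
            mul_le_mul_of_nonneg_right (mul_le_mul_of_nonneg_left hle (by linarith)) hjs0
        _ = (1+γ) * (Real.exp 1 * j) := by field_simp
    · push_neg at hcase
      have hP1 : moser N j s ^ N / s ^ (N - 1) ≤ 1 := moser_pow_high N hN j hj s hs0 hcase
      have hP0 : 0 ≤ moser N j s ^ N / s ^ (N - 1) := by
        apply div_nonneg _ (by positivity)
        rw [moser, if_neg (not_le.mpr hcase)]
        positivity
      have hA0 : 0 ≤ Real.log (Real.exp 1 / s) + γ * Real.log (Real.log (Real.exp 1 / s)) := by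
        nlinarith
      have hsle : Real.exp 1 / s ≤ Real.exp 1 * j := by
        rw [div_le_iff₀ hs0]
        have hjs : 1 ≤ (j:ℝ)*s := by rw [div_lt_iff₀ hj0] at hcase; linarith
        nlinarith [Real.exp_pos 1]
      have hlA : Real.log (Real.exp 1 / s) ≤ Real.exp 1 * j :=
        (Real.log_le_log (by positivity) hsle).trans (Real.log_le_self (by positivity))
      calc (Real.log (Real.exp 1 / s) + γ * Real.log (Real.log (Real.exp 1 / s))) *
            (moser N j s ^ N / s ^ (N - 1))
          ≤ (Real.log (Real.exp 1 / s) + γ * Real.log (Real.log (Real.exp 1 / s))) * 1 :=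
            mul_le_mul_of_nonneg_left hP1 hA0
        _ ≤ (1+γ) * (Real.exp 1 * j) := by nlinarith
  have hFpos : ∀ s, 0 ≤ F s := fun s => (Real.exp_pos _).le
  have hint : IntegrableOn F (Set.Ioc (0:ℝ) 1) := by
    apply Integrable.mono' (g := fun _ => Real.exp ((1+γ)*(Real.exp 1 * j)))
      (integrableOn_const measure_Ioc_lt_top.ne) hmeas.aestronglyMeasurable.restrict
    filter_upwards [ae_restrict_mem measurableSet_Ioc] with s hs
    rw [Real.norm_eq_abs, abs_of_pos (Real.exp_pos _)]
    exact hub s hs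
  have hsub : Set.Ioc (0:ℝ) (1/(j:ℝ)) ⊆ Set.Ioc 0 1 := Set.Ioc_subset_Ioc_right hinv1
  have h2' : ∫ s in Set.Ioc (0:ℝ) (1/(j:ℝ)), F s ≤ ∫ s in Set.Ioc (0:ℝ) 1, F s :=
    setIntegral_mono_set hint (ae_of_all _ hFpos) hsub.eventuallyLE
  have h1' : ∫ s in Set.Ioc (0:ℝ) (1/(j:ℝ)), Real.exp (((j:ℝ) * Mj γ j) * s) ≤
      ∫ s in Set.Ioc (0:ℝ) (1/(j:ℝ)), F s := by
    apply setIntegral_mono_on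
    · exact (Real.continuous_exp.comp (continuous_const.mul continuous_id)).integrableOn_Ioc
    · exact hint.mono_set hsub
    · exact measurableSet_Ioc
    · rintro s ⟨hs0, hsle⟩
      have hA : Mj γ j ≤ Real.log (Real.exp 1 / s) +
          γ * Real.log (Real.log (Real.exp 1 / s)) := by
        have hjs : s * j ≤ 1 := (le_div_iff₀ hj0).mp hsle
        have hle1 : Real.exp 1 * j ≤ Real.exp 1 / s := by
          rw [le_div_iff₀ hs0]; nlinarith [Real.exp_pos 1]
        have hlog1 : Lj j ≤ Real.log (Real.exp 1 / s) := Real.log_le_log (by positivity) hle1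
        have hlog2 : Real.log (Lj j) ≤ Real.log (Real.log (Real.exp 1 / s)) :=
          Real.log_le_log (by linarith) hlog1
        unfold Mj
        nlinarith
      show Real.exp _ ≤ F s
      rw [hF]
      apply Real.exp_le_exp.mpr
      rw [moser_pow_low N hN j hj s hs0 hsle]
      calc (j:ℝ) * Mj γ j * s = Mj γ j * ((j:ℝ)*s) := by ring
        _ ≤ (Real.log (Real.exp 1 / s) + γ * Real.log (Real.log (Real.exp 1 / s))) * ((j:ℝ)*s) :=
          mul_le_mul_of_nonneg_right hA (by positivity)
  have hceq : ∫ s in Set.Ioc (0:ℝ) (1/(j:ℝ)), Real.exp (((j:ℝ)*Mj γ j)*s) = Bj γ j := by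
    rw [← intervalIntegral.integral_of_le (by positivity : (0:ℝ) ≤ 1/(j:ℝ))]
    set c := (j:ℝ) * Mj γ j with hcdef
    have hderiv : ∀ x ∈ Set.uIcc (0:ℝ) (1/(j:ℝ)),
        HasDerivAt (fun y => Real.exp (c*y) / c) (Real.exp (c*x)) x := by
      intro x _
      have h := ((Real.hasDerivAt_exp (c*x)).comp x ((hasDerivAt_id x).const_mul c)).div_const c
      refine h.congr_deriv ?_
      rw [mul_one, mul_div_assoc, div_self hc.ne', mul_one]
    rw [intervalIntegral.integral_eq_sub_of_hasDerivAt hderiv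
      ((Real.continuous_exp.comp (continuous_const.mul continuous_id)).intervalIntegrable _ _)]
    have hcj : c * (1/(j:ℝ)) = Mj γ j := by rw [hcdef]; field_simp
    rw [hcj, mul_zero, Real.exp_zero, div_sub_div_same, Bj]
  have hJ : Jfun N γ (moser N j) = ∫ s in Set.Ioc (0:ℝ) 1, F s := rfl
  rw [hJ, ← hceq]
  exact h1'.trans h2'

lemma one_le_e : (1:ℝ) ≤ Real.exp 1 := by
  nlinarith [Real.add_one_le_exp 1]

lemma exp_Mj (γ : ℝ) {j : ℕ} (hj : 1 ≤ j) :
    Real.exp (Mj γ j) = Real.exp 1 * j * (Lj j ^ (γ-1) * Lj j) := by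
  have hj0 : (0:ℝ) < j := by exact_mod_cast hj
  have hL0 : (0:ℝ) < Lj j := lt_of_lt_of_le one_pos (one_le_Lj hj)
  have hsplit : Lj j ^ γ = Lj j ^ (γ-1) * Lj j := by
    conv_lhs => rw [show γ = (γ-1)+1 by ring]
    rw [Real.rpow_add_one hL0.ne']
  have hexpL : Real.exp (Lj j) = Real.exp 1 * j := by
    rw [Lj]; exact Real.exp_log (by positivity)
  rw [Mj, Real.exp_add, hexpL, mul_comm γ (Real.log (Lj j)), Real.exp_mul,
    Real.exp_log hL0, hsplit]

lemma eps_bounds (γ : ℝ) (hγ : 1 < γ) {j : ℕ} (hj : 1 ≤ j) :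
    -(γ * (Real.log (Lj j) / Lj j)) - 1/(j:ℝ) ≤
      Bj γ j / (Real.exp 1 * Lj j ^ (γ-1)) - 1 ∧
    Bj γ j / (Real.exp 1 * Lj j ^ (γ-1)) - 1 ≤ 0 := by
  have hj1 : (1:ℝ) ≤ j := by exact_mod_cast hj
  have hj0 : (0:ℝ) < j := by linarith
  have hL : 1 ≤ Lj j := one_le_Lj hj
  have hL0 : (0:ℝ) < Lj j := by linarith
  have ht : 0 ≤ Real.log (Lj j) := Real.log_nonneg hL
  have hM : 1 ≤ Mj γ j := one_le_Mj (by linarith) hj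
  have hM0 : (0:ℝ) < Mj γ j := by linarith
  have ha : 1 ≤ Lj j ^ (γ-1) := Real.one_le_rpow hL (by linarith)
  have ha0 : (0:ℝ) < Lj j ^ (γ-1) := by linarith
  have he1 := one_le_e
  have he0 := Real.exp_pos 1
  have hMdef : Mj γ j = Lj j + γ * Real.log (Lj j) := rfl
  have hεval : Bj γ j / (Real.exp 1 * Lj j ^ (γ-1)) - 1 =
      Lj j / Mj γ j - 1 / (Real.exp 1 * j * Mj γ j * Lj j ^ (γ-1)) - 1 := by
    rw [Bj, exp_Mj γ hj]
    field_simp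
  rw [hεval]
  constructor
  · have h1 : 1 / (Real.exp 1 * j * Mj γ j * Lj j ^ (γ-1)) ≤ 1/(j:ℝ) := by
      apply one_div_le_one_div_of_le hj0
      have hb1 : (j:ℝ) ≤ Real.exp 1 * j := le_mul_of_one_le_left hj0.le he1
      have hb2 : Real.exp 1 * j ≤ Real.exp 1 * j * Mj γ j :=
        le_mul_of_one_le_right (by positivity) hM
      have hb3 : Real.exp 1 * j * Mj γ j ≤ Real.exp 1 * j * Mj γ j * Lj j ^ (γ-1) :=
        le_mul_of_one_le_right (by positivity) ha
      linarith
    have h2 : 1 - γ * (Real.log (Lj j) / Lj j) ≤ Lj j / Mj γ j := by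
      have hrw : 1 - γ * (Real.log (Lj j) / Lj j) =
          (Lj j - γ * Real.log (Lj j)) / Lj j := by field_simp
      rw [hrw, div_le_div_iff₀ hL0 hM0, hMdef]
      nlinarith [sq_nonneg (γ * Real.log (Lj j))]
    linarith
  · have h3 : Lj j / Mj γ j ≤ 1 := by
      rw [div_le_one hM0, hMdef]; nlinarith
    have h4 : 0 ≤ 1 / (Real.exp 1 * j * Mj γ j * Lj j ^ (γ-1)) := by positivity
    linarith

lemma Lj_tendsto : Tendsto Lj atTop atTop := by
  have h1 : Tendsto (fun j : ℕ => Real.exp 1 * (j:ℝ)) atTop atTop :=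
    (tendsto_natCast_atTop_atTop).const_mul_atTop (Real.exp_pos 1)
  exact Real.tendsto_log_atTop.comp h1

lemma eps_tendsto (γ : ℝ) (hγ : 1 < γ) :
    Tendsto (fun j : ℕ => Bj γ j / (Real.exp 1 * Lj j ^ (γ-1)) - 1) atTop (nhds 0) := by
  have hlogdiv : Tendsto (fun j : ℕ => Real.log (Lj j) / Lj j) atTop (nhds 0) := by
    have h := Real.isLittleO_log_id_atTop.tendsto_div_nhds_zero
    exact h.comp Lj_tendsto
  have hlow : Tendsto (fun j : ℕ => -(γ * (Real.log (Lj j)/Lj j)) - 1/(j:ℝ)) atTop (nhds 0) := by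
    have h1 := (hlogdiv.const_mul γ).neg
    have h2 : Tendsto (fun j : ℕ => 1/(j:ℝ)) atTop (nhds 0) := tendsto_one_div_atTop_nhds_zero_nat
    simpa using h1.sub h2
  exact tendsto_of_tendsto_of_tendsto_of_le_of_le' hlow tendsto_const_nhds
    (eventually_atTop.mpr ⟨1, fun j hj => (eps_bounds γ hγ hj).1⟩)
    (eventually_atTop.mpr ⟨1, fun j hj => (eps_bounds γ hγ hj).2⟩)

lemma memEN_moser (N : ℕ) (hN : 2 ≤ N) (j : ℕ) (hj : 1 ≤ j) :
    MemEN N (moser N j) (fun t => if t ≤ 1/(j:ℝ) then (j:ℝ)^((1:ℝ)/N) else 0) := by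
  have hj1 : (1:ℝ) ≤ j := by exact_mod_cast hj
  have hj0 : (0:ℝ) < j := by linarith
  have hNr : (N:ℝ) ≠ 0 := Nat.cast_ne_zero.mpr (by omega)
  have hc0 : (0:ℝ) < (j:ℝ) ^ ((1:ℝ)/N) := Real.rpow_pos_of_pos hj0 _
  have hcN : ((j:ℝ) ^ ((1:ℝ)/N)) ^ (N:ℕ) = (j:ℝ) := by
    rw [← Real.rpow_natCast ((j:ℝ) ^ ((1:ℝ)/N)) N, ← Real.rpow_mul hj0.le, one_div,
      inv_mul_cancel₀ hNr, Real.rpow_one]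
  have hinv : (0:ℝ) ≤ 1/(j:ℝ) := by positivity
  have hinv1 : 1/(j:ℝ) ≤ 1 := by rw [div_le_one hj0]; exact hj1
  have hmeas : Measurable (fun t : ℝ => if t ≤ 1/(j:ℝ) then (j:ℝ)^((1:ℝ)/N) else 0) :=
    Measurable.ite measurableSet_Iic measurable_const measurable_const
  refine ⟨?_, ?_, ?_, ?_, ?_⟩
  · rintro s ⟨hs0, hs1⟩
    rw [intervalIntegral.integral_of_le hs0, integral_step s (1/(j:ℝ)) _ hs0 hinv]
    by_cases hcase : s ≤ 1/(j:ℝ)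
    · rw [moser, if_pos hcase, min_eq_left hcase, mul_comm]
    · push_neg at hcase
      rw [moser, if_neg (not_le.mpr hcase), min_eq_right hcase.le]
      rw [one_div, ← Real.rpow_neg_one (j:ℝ), ← Real.rpow_add hj0]
      congr 1
      field_simp
      ring
  · rw [moser, if_pos hinv, mul_zero]
  · rw [intervalIntegrable_iff, Set.uIoc_of_le (zero_le_one)]
    apply Integrable.mono' (g := fun _ => (j:ℝ)^((1:ℝ)/N))
      (integrableOn_const measure_Ioc_lt_top.ne) hmeas.aestronglyMeasurable.restrict
    refine ae_of_all _ fun t => ?_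
    rw [Real.norm_eq_abs]
    by_cases h : t ≤ 1/(j:ℝ)
    · rw [if_pos h, abs_of_pos hc0]
    · rw [if_neg h, abs_zero]; exact hc0.le
  · apply Integrable.mono' (g := fun _ => (j:ℝ))
      (integrableOn_const measure_Ioc_lt_top.ne)
      ((hmeas.abs.pow_const N).aestronglyMeasurable.restrict)
    refine ae_of_all _ fun t => ?_
    rw [Real.norm_eq_abs, abs_of_nonneg (by positivity)]
    by_cases h : t ≤ 1/(j:ℝ)
    · simp only [h, if_true]
      rw [abs_of_pos hc0, hcN]
    · simp only [h, if_false]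
      rw [abs_zero, zero_pow (by omega : N ≠ 0)]
      linarith
  · have heq : ∀ t : ℝ, |if t ≤ 1/(j:ℝ) then (j:ℝ)^((1:ℝ)/N) else 0| ^ N =
        if t ≤ 1/(j:ℝ) then (j:ℝ) else 0 := by
      intro t
      by_cases h : t ≤ 1/(j:ℝ)
      · simp only [h, if_true]; rw [abs_of_pos hc0, hcN]
      · simp only [h, if_false]; rw [abs_zero, zero_pow (by omega : N ≠ 0)]
    calc (∫ t in Set.Ioc (0:ℝ) 1, |if t ≤ 1/(j:ℝ) then (j:ℝ)^((1:ℝ)/N) else 0| ^ N)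
        = ∫ t in Set.Ioc (0:ℝ) 1, (if t ≤ 1/(j:ℝ) then (j:ℝ) else 0) := by
          congr 1; funext t; exact heq t
      _ = min 1 (1/(j:ℝ)) * j := integral_step 1 (1/(j:ℝ)) _ zero_le_one hinv
      _ = 1 := by rw [min_eq_right hinv1, one_div, inv_mul_cancel₀ hj0.ne']

/-- for `γ > 1`, `J_γ (w_j) → +∞` along the infinitesimal Moser sequence,
more precisely `J_γ(w_j) ≥ e · (log (e j))^{γ-1} (1 + o(1))`; in particular
`sup_{v ∈ E_N} J_γ(v) = +∞`. -/
theorem Jfun_moser_tendsto_atTop (N : ℕ) (hN : 2 ≤ N) (γ : ℝ) (hγ : 1 < γ) :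
    Filter.Tendsto (fun j : ℕ => Jfun N γ (moser N j)) Filter.atTop Filter.atTop ∧
    (∃ ε : ℕ → ℝ, Filter.Tendsto ε Filter.atTop (nhds 0) ∧
      ∀ᶠ j : ℕ in Filter.atTop,
        Real.exp 1 * Real.log (Real.exp 1 * j) ^ (γ - 1) * (1 + ε j) ≤
          Jfun N γ (moser N j)) ∧
    (∀ C : ℝ, ∃ u g : ℝ → ℝ, MemEN N u g ∧ C < Jfun N γ u) := by
  set ε : ℕ → ℝ := fun j => Bj γ j / (Real.exp 1 * Lj j ^ (γ-1)) - 1 with hε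
  have hεt : Tendsto ε atTop (nhds 0) := eps_tendsto γ hγ
  have hεeq : ∀ j : ℕ, 1 ≤ j → Real.exp 1 * Lj j ^ (γ-1) * (1 + ε j) = Bj γ j := by
    intro j hj
    have hL : 1 ≤ Lj j := one_le_Lj hj
    have hL0 : (0:ℝ) < Lj j ^ (γ-1) := Real.rpow_pos_of_pos (by linarith) _
    have ha0 : (0:ℝ) < Real.exp 1 * Lj j ^ (γ-1) := mul_pos (Real.exp_pos 1) hL0
    have h1 : 1 + ε j = Bj γ j / (Real.exp 1 * Lj j ^ (γ-1)) := by rw [hε]; ring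
    rw [h1, mul_div_cancel₀ _ ha0.ne']
  have hineq : ∀ᶠ j : ℕ in atTop,
      Real.exp 1 * Real.log (Real.exp 1 * j) ^ (γ - 1) * (1 + ε j) ≤
        Jfun N γ (moser N j) := by
    filter_upwards [eventually_ge_atTop 1] with j hj
    have h := Bj_le_Jfun N hN γ hγ hj
    have h2 := hεeq j hj
    show Real.exp 1 * Lj j ^ (γ-1) * (1 + ε j) ≤ _
    rw [h2]; exact h
  have hhalf : ∀ᶠ j : ℕ in atTop,
      Real.exp 1 * Lj j ^ (γ-1) * (1/2) ≤ Jfun N γ (moser N j) := by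
    filter_upwards [hineq, hεt.eventually (eventually_gt_nhds (by norm_num : (-1/2:ℝ) < 0)),
      eventually_ge_atTop 1] with j h1 h2 h3
    have hL : 1 ≤ Lj j := one_le_Lj h3
    have hL0 : (0:ℝ) < Lj j ^ (γ-1) := Real.rpow_pos_of_pos (by linarith) _
    have hb : (0:ℝ) ≤ Real.exp 1 * Lj j ^ (γ-1) := (mul_pos (Real.exp_pos 1) hL0).le
    have hstep : Real.exp 1 * Lj j ^ (γ-1) * (1/2) ≤
        Real.exp 1 * Lj j ^ (γ-1) * (1 + ε j) :=
      mul_le_mul_of_nonneg_left (by linarith) hb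
    exact hstep.trans h1
  have htend : Tendsto (fun j : ℕ => Jfun N γ (moser N j)) atTop atTop := by
    apply tendsto_atTop_mono' atTop hhalf
    have h1 : Tendsto (fun j : ℕ => Lj j ^ (γ-1)) atTop atTop :=
      (tendsto_rpow_atTop (by linarith : (0:ℝ) < γ-1)).comp Lj_tendsto
    exact (h1.const_mul_atTop (Real.exp_pos 1)).atTop_mul_const (by norm_num : (0:ℝ) < 1/2)
  refine ⟨htend, ⟨ε, hεt, hineq⟩, ?_⟩
  intro C
  obtain ⟨j, hjC, hj1⟩ := ((htend.eventually_ge_atTop (C+1)).and (eventually_ge_atTop 1)).exists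
  exact ⟨moser N j, _, memEN_moser N hN j hj1, by linarith⟩
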